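/- For every density pair (f, g) with weight λ one has ∫ K(x,x) λ(x) f(x) dx ≥ (∫ √(K(x,x)) f(x) dx)², and equality holds for the choice g(x) = √(K(x,x)) f(x) / ∫ √(K(y,y)) f(y) dy (assuming 0 < ∫ √(K(y,y)) f(y) dy < ∞ and K(x,x) > 0 for f-a.e. x). Consequently, among all density pairs (f, g), the quantity C_{K,f,g} is minimised by g(x) ∝ √(K(x,x)) f(x). -/

import Mathlib

open MeasureTheory

/-- For every density pair `(f, g)` with weight `λ` one has
`∫ K(x,x) λ(x) f(x) dx ≥ (∫ √(K(x,x)) f(x) dx)²` (the left-hand side may be infinite,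
so it is expressed as a lower Lebesgue integral), and equality holds for the choice
`g(x) = √(K(x,x)) f(x) / ∫ √(K(y,y)) f(y) dy` (with weight
`λ(x) = (∫ √(K(y,y)) f(y) dy) / √(K(x,x))`), assuming `0 < ∫ √(K(y,y)) f(y) dy < ∞`
and `K(x,x) > 0` for `f`-a.e. `x`.  Consequently, among all density pairs `(f, g)`,
the quantity `C_{K,f,g}` is minimised by `g(x) ∝ √(K(x,x)) f(x)`.
Here `K(x,y) = ⟪φ(x), φ(y)⟫`, so `√(K(x,x)) = ‖φ x‖`. -/
theorem statement1
    {d : ℕ}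
    {H : Type*} [NormedAddCommGroup H] [InnerProductSpace ℝ H]
    (φ : (Fin d → ℝ) → H) (hφ : StronglyMeasurable φ)
    (f : (Fin d → ℝ) → ℝ)
    (hfm : Measurable f) (hf0 : ∀ x, 0 ≤ f x) (hf1 : ∫ x, f x = 1)
    (hmom1 : Integrable (fun x => ‖φ x‖ * f x)) :
    -- (a) the inequality, for every density pair (f, g) with weight lam
    (∀ g lam : (Fin d → ℝ) → ℝ, Measurable g → (∀ x, 0 ≤ g x) → (∫ x, g x) = 1 →
        Measurable lam → (∀ x, 0 ≤ lam x) → f =ᵐ[volume] (fun x => lam x * g x) →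
        ENNReal.ofReal ((∫ x, ‖φ x‖ * f x) ^ 2)
          ≤ ∫⁻ x, ENNReal.ofReal (‖φ x‖ ^ 2 * lam x * f x)) ∧
    -- (b) equality (and optimality) for the choice g₀(x) = ‖φ x‖ f(x) / ∫ ‖φ y‖ f(y) dy,
    --     with weight lam₀(x) = (∫ ‖φ y‖ f(y) dy) / ‖φ x‖
    ((0 < ∫ x, ‖φ x‖ * f x) → (∀ᵐ x ∂volume, f x ≠ 0 → 0 < ‖φ x‖) →
      ((∫ x, ‖φ x‖ * f x / ∫ y, ‖φ y‖ * f y) = 1 ∧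
       f =ᵐ[volume] (fun x => ((∫ y, ‖φ y‖ * f y) / ‖φ x‖)
          * (‖φ x‖ * f x / ∫ y, ‖φ y‖ * f y)) ∧
       ∫ x, ‖φ x‖ ^ 2 * ((∫ y, ‖φ y‖ * f y) / ‖φ x‖) * f x
          = (∫ x, ‖φ x‖ * f x) ^ 2 ∧
       (∀ g lam : (Fin d → ℝ) → ℝ, Measurable g → (∀ x, 0 ≤ g x) → (∫ x, g x) = 1 →
          Measurable lam → (∀ x, 0 ≤ lam x) → f =ᵐ[volume] (fun x => lam x * g x) →
          ∫⁻ x, ENNReal.ofReal (‖φ x‖ ^ 2 * ((∫ y, ‖φ y‖ * f y) / ‖φ x‖) * f x)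
            ≤ ∫⁻ x, ENNReal.ofReal (‖φ x‖ ^ 2 * lam x * f x)))) := by
  have hn : Measurable fun x => ‖φ x‖ := hφ.norm.measurable
  set I₀ : ℝ := ∫ x, ‖φ x‖ * f x with hI₀
  have hI₀nn : 0 ≤ I₀ := integral_nonneg fun x => mul_nonneg (norm_nonneg _) (hf0 x)
  have key : ∀ g lam : (Fin d → ℝ) → ℝ, Measurable g → (∀ x, 0 ≤ g x) → (∫ x, g x) = 1 →
      Measurable lam → (∀ x, 0 ≤ lam x) → f =ᵐ[volume] (fun x => lam x * g x) →
      ENNReal.ofReal ((∫ x, ‖φ x‖ * f x) ^ 2)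
        ≤ ∫⁻ x, ENNReal.ofReal (‖φ x‖ ^ 2 * lam x * f x) := by
    intro g lam hgm hg0 hg1 hlm hl0 hfg
    have hgint : Integrable g := by
      by_contra h
      rw [integral_undef h] at hg1
      norm_num at hg1
    set U : (Fin d → ℝ) → ENNReal :=
      fun x => ENNReal.ofReal (‖φ x‖ * lam x * Real.sqrt (g x)) with hU
    set V : (Fin d → ℝ) → ENNReal := fun x => ENNReal.ofReal (Real.sqrt (g x)) with hV
    have hUm : AEMeasurable U := (((hn.mul hlm).mul hgm.sqrt).ennreal_ofReal).aemeasurable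
    have hVm : AEMeasurable V := (hgm.sqrt.ennreal_ofReal).aemeasurable
    have h22 : Real.HolderConjugate 2 2 := Real.HolderConjugate.two_two
    have holder := ENNReal.lintegral_mul_le_Lp_mul_Lq volume h22 hUm hVm
    have hsq2 : ∀ a : ℝ, 0 ≤ a → ENNReal.ofReal a ^ (2 : ℝ) = ENNReal.ofReal (a ^ 2) := by
      intro a ha
      rw [ENNReal.ofReal_rpow_of_nonneg ha (by norm_num : (0:ℝ) ≤ 2), Real.rpow_two]
    have hVsq : ∀ x, V x ^ (2 : ℝ) = ENNReal.ofReal (g x) := by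
      intro x
      show ENNReal.ofReal (Real.sqrt (g x)) ^ (2 : ℝ) = ENNReal.ofReal (g x)
      rw [hsq2 _ (Real.sqrt_nonneg _), Real.sq_sqrt (hg0 x)]
    have hVint : ∫⁻ x, V x ^ (2 : ℝ) = 1 := by
      simp_rw [hVsq]
      rw [← ofReal_integral_eq_lintegral_ofReal hgint (Filter.Eventually.of_forall hg0), hg1]
      simp
    have hUsq : (fun x => U x ^ (2 : ℝ))
        =ᵐ[volume] fun x => ENNReal.ofReal (‖φ x‖ ^ 2 * lam x * f x) := by
      filter_upwards [hfg] with x hx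
      show ENNReal.ofReal (‖φ x‖ * lam x * Real.sqrt (g x)) ^ (2 : ℝ)
          = ENNReal.ofReal (‖φ x‖ ^ 2 * lam x * f x)
      rw [hsq2 _ (mul_nonneg (mul_nonneg (norm_nonneg _) (hl0 x)) (Real.sqrt_nonneg _))]
      congr 1
      have hsq : Real.sqrt (g x) ^ 2 = g x := Real.sq_sqrt (hg0 x)
      calc (‖φ x‖ * lam x * Real.sqrt (g x)) ^ 2
          = ‖φ x‖ ^ 2 * lam x * (lam x * Real.sqrt (g x) ^ 2) := by ring
        _ = ‖φ x‖ ^ 2 * lam x * (lam x * g x) := by rw [hsq]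
        _ = ‖φ x‖ ^ 2 * lam x * f x := by rw [← hx]
    have hUV : (fun x => ENNReal.ofReal (‖φ x‖ * f x)) =ᵐ[volume] fun x => (U * V) x := by
      filter_upwards [hfg] with x hx
      simp only [hU, hV, Pi.mul_apply]
      rw [← ENNReal.ofReal_mul
        (mul_nonneg (mul_nonneg (norm_nonneg _) (hl0 x)) (Real.sqrt_nonneg _))]
      congr 1
      rw [hx]
      have hg : Real.sqrt (g x) * Real.sqrt (g x) = g x := Real.mul_self_sqrt (hg0 x)
      linear_combination (-(‖φ x‖ * lam x)) * hg
    have hIlin : ENNReal.ofReal I₀ = ∫⁻ x, (U * V) x := by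
      rw [hI₀, ofReal_integral_eq_lintegral_ofReal hmom1
        (Filter.Eventually.of_forall fun x => mul_nonneg (norm_nonneg _) (hf0 x))]
      exact lintegral_congr_ae hUV
    set A : ENNReal := ∫⁻ x, ENNReal.ofReal (‖φ x‖ ^ 2 * lam x * f x) with hA
    have hUint : ∫⁻ x, U x ^ (2 : ℝ) = A := lintegral_congr_ae hUsq
    have hfinal : ENNReal.ofReal I₀ ≤ A ^ ((1 : ℝ) / 2) := by
      rw [hIlin]
      calc ∫⁻ x, (U * V) x
          ≤ (∫⁻ x, U x ^ (2 : ℝ)) ^ ((1:ℝ)/2) * (∫⁻ x, V x ^ (2 : ℝ)) ^ ((1:ℝ)/2) := holder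
        _ = A ^ ((1 : ℝ) / 2) := by rw [hUint, hVint, ENNReal.one_rpow, mul_one]
    calc ENNReal.ofReal (I₀ ^ 2)
        = ENNReal.ofReal I₀ ^ (2 : ℝ) := (hsq2 _ hI₀nn).symm
      _ ≤ (A ^ ((1 : ℝ) / 2)) ^ (2 : ℝ) :=
          ENNReal.rpow_le_rpow hfinal (by norm_num)
      _ = A := by rw [← ENNReal.rpow_mul]; norm_num
  refine ⟨key, ?_⟩
  intro hIpos hphi
  have hIne : I₀ ≠ 0 := ne_of_gt hIpos
  have heq : ∀ x, ‖φ x‖ ^ 2 * (I₀ / ‖φ x‖) * f x = I₀ * (‖φ x‖ * f x) := by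
    intro x
    rcases eq_or_ne (‖φ x‖) 0 with h | h
    · simp [h]
    · field_simp
  have hint3 : ∫ x, ‖φ x‖ ^ 2 * (I₀ / ‖φ x‖) * f x = I₀ ^ 2 := by
    simp_rw [heq]
    rw [integral_const_mul, ← hI₀, sq]
  refine ⟨?_, ?_, hint3, ?_⟩
  · rw [integral_div, ← hI₀, div_self hIne]
  · filter_upwards [hphi] with x hx
    rcases eq_or_ne (f x) 0 with hfx | hfx
    · simp [hfx]
    · have h1 : ‖φ x‖ ≠ 0 := (hx hfx).ne'
      field_simp
  · intro g lam hgm hg0 hg1 hlm hl0 hfg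
    have : ∫⁻ x, ENNReal.ofReal (‖φ x‖ ^ 2 * (I₀ / ‖φ x‖) * f x)
        = ENNReal.ofReal (I₀ ^ 2) := by
      simp_rw [heq]
      rw [← ofReal_integral_eq_lintegral_ofReal (hmom1.const_mul I₀)
        (Filter.Eventually.of_forall fun x =>
          mul_nonneg hI₀nn (mul_nonneg (norm_nonneg _) (hf0 x)))]
      rw [integral_const_mul, ← hI₀, sq]
    rw [this]
    exact key g lam hgm hg0 hg1 hlm hl0 hfg
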